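/- Let π : C ⥤ D be a functor with a fully faithful left adjoint l : D ⥤ C (with counit ε and unit η). Assume C has pushouts and π preserves pushouts. Fix c in C and f : π.obj c ⟶ d' in D, and let c' be the pushout in C of the counit ε_c : l(π.obj c) ⟶ c along l.map f : l(π.obj c) ⟶ l d', with pushout inclusion j : l d' ⟶ c'. Then the composite η_{d'} ≫ π.map j : d' ⟶ π.obj c' is an isomorphism; consequently, applying π to the pushout square identifies the induced map π.obj c ⟶ π.obj c' with f. -/

import Mathlib

open CategoryTheory Limits

/-- Let `π : C ⥤ D` have a fully faithful left adjoint `l`, let `C` have pushouts and let `π`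
preserve pushouts. For `f : π.obj c ⟶ d'`, form the pushout `c'` of the counit
`ε_c : l (π.obj c) ⟶ c` along `l.map f : l (π.obj c) ⟶ l d'`, with pushout inclusion
`j = pushout.inr : l d' ⟶ c'`. Then `η_{d'} ≫ π.map j : d' ⟶ π.obj c'` is an isomorphism,
and applying `π` identifies the induced map `π.obj c ⟶ π.obj c'` with `f`. -/
theorem unit_comp_map_inr_isIso_of_pushout_counit
    {C : Type*} {D : Type*} [Category C] [Category D]
    (π : C ⥤ D) (l : D ⥤ C) (adj : l ⊣ π) [l.Full] [l.Faithful]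
    [HasPushouts C] [PreservesColimitsOfShape WalkingSpan π]
    (c : C) {d' : D} (f : π.obj c ⟶ d') :
    IsIso (adj.unit.app d' ≫ π.map (pushout.inr (adj.counit.app c) (l.map f))) ∧
    π.map (pushout.inl (adj.counit.app c) (l.map f)) =
      f ≫ adj.unit.app d' ≫ π.map (pushout.inr (adj.counit.app c) (l.map f)) := by
  have hε : IsIso (π.map (adj.counit.app c)) := by
    have h : IsIso (adj.unit.app (π.obj c) ≫ π.map (adj.counit.app c)) := by
      rw [adj.right_triangle_components]; exact ⟨⟨𝟙 _, by simp, by simp⟩⟩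
    exact IsIso.of_isIso_comp_left (adj.unit.app (π.obj c)) _
  have hP : IsPushout (adj.counit.app c) (l.map f)
      (pushout.inl (adj.counit.app c) (l.map f))
      (pushout.inr (adj.counit.app c) (l.map f)) := IsPushout.of_hasPushout _ _
  have hP2 := hP.map π
  have hQ : IsPushout (π.map (adj.counit.app c)) (π.map (l.map f))
      (inv (π.map (adj.counit.app c)) ≫ π.map (l.map f)) (𝟙 _) :=
    IsPushout.of_horiz_isIso ⟨by simp⟩
  have hiso : IsIso (π.map (pushout.inr (adj.counit.app c) (l.map f))) := by
    have h1 := hQ.isColimit.comp_coconePointUniqueUpToIso_hom hP2.isColimit WalkingSpan.right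
    simp only [IsPushout.cocone, CommSq.cocone, PushoutCocone.mk_ι_app,
      Category.id_comp] at h1
    rw [← h1]; exact IsIso.comp_isIso' (IsIso.id _) (Iso.isIso_hom _)
  constructor
  · infer_instance
  · have hnat : f ≫ adj.unit.app d' = adj.unit.app (π.obj c) ≫ π.map (l.map f) :=
      (adj.unit.naturality f)
    have hsq : π.map (adj.counit.app c) ≫ π.map (pushout.inl (adj.counit.app c) (l.map f)) =
        π.map (l.map f) ≫ π.map (pushout.inr (adj.counit.app c) (l.map f)) := by
      rw [← π.map_comp, ← π.map_comp, pushout.condition]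
    calc π.map (pushout.inl (adj.counit.app c) (l.map f))
        = (adj.unit.app (π.obj c) ≫ π.map (adj.counit.app c)) ≫
            π.map (pushout.inl (adj.counit.app c) (l.map f)) := by
          rw [adj.right_triangle_components]; simp
      _ = adj.unit.app (π.obj c) ≫ π.map (l.map f) ≫
            π.map (pushout.inr (adj.counit.app c) (l.map f)) := by
          rw [Category.assoc, hsq]
      _ = f ≫ adj.unit.app d' ≫ π.map (pushout.inr (adj.counit.app c) (l.map f)) := by
          rw [← Category.assoc, ← hnat, Category.assoc]
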